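/- For every odd prime p, with d = p³+1, one has ∑_{o ∈ O_{d,p}} |o|·(3 − ht(o)) = (p−1)³/2. -/

import Mathlib

open scoped Classical

/-- The orbit of `i ∈ ℤ/dℤ` under multiplication by `p` (as a finite set). -/
noncomputable def orb (p d : ℕ) [NeZero d] (i : ZMod d) : Finset (ZMod d) :=
  Finset.image (fun j : ℕ => (p : ZMod d) ^ j * i) (Finset.range d)

/-- The set `O_{d,p}` of orbits of `⟨p⟩` on `ℤ/dℤ` other than `{0}` and `{d/2}`. -/
noncomputable def Odp (p d : ℕ) [NeZero d] : Finset (Finset (ZMod d)) :=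
  Finset.image (orb p d) (Finset.univ.filter fun x : ZMod d => x ≠ 0 ∧ x + x ≠ 0)

/-- The sequence `a_0, a_1, …` attached to the word of the orbit of `i` at the base
point `i`: `a_0 = 0` and `a_(j+1) = a_j ± 1` according as `−p^j·i ∈ B` or `−p^j·i ∈ A`. -/
def aseq (p d : ℕ) [NeZero d] (i : ZMod d) : ℕ → ℤ
  | 0 => 0
  | j + 1 => aseq p d i j +
      (if (d : ℕ) < 2 * (-((p : ZMod d) ^ j * i)).val then 1 else -1)

/-- The height of the word of the orbit of `i` read from the base point `i`:
`max_{0 ≤ j ≤ m} a_j − min_{0 ≤ j ≤ m} a_j`, where `m` is the orbit size. -/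
noncomputable def htElt (p d : ℕ) [NeZero d] (i : ZMod d) : ℕ :=
  ((Finset.range ((orb p d i).card + 1)).sup' Finset.nonempty_range_add_one (aseq p d i)
    - (Finset.range ((orb p d i).card + 1)).inf' Finset.nonempty_range_add_one
        (aseq p d i)).toNat

/-- The height `ht(o)` of an orbit `o` (independent of the chosen base point). -/
noncomputable def htOrbit (p d : ℕ) [NeZero d] (o : Finset (ZMod d)) : ℕ :=
  o.sup (htElt p d)



section ShaAux

lemma pcube (p : ℕ) : ((p : ZMod (p^3+1)))^3 = -1 := by
  have h : ((p^3+1 : ℕ) : ZMod (p^3+1)) = 0 := by exact_mod_cast ZMod.natCast_self _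
  push_cast at h
  linear_combination h

lemma psix (p : ℕ) : ((p : ZMod (p^3+1)))^6 = 1 := by
  linear_combination ((p : ZMod (p^3+1))^3 - 1) * pcube p

lemma punit (p : ℕ) : IsUnit (p : ZMod (p^3+1)) := by
  refine IsUnit.of_mul_eq_one ((p : ZMod (p^3+1))^5) ?_
  rw [← pow_succ']
  exact psix p

lemma addself (p : ℕ) (x : ZMod (p^3+1)) :
    x + x = 0 ↔ (x.val = 0 ∨ 2 * x.val = p^3+1) := by
  have hx : ((2 * x.val : ℕ) : ZMod (p^3+1)) = x + x := by
    push_cast [ZMod.natCast_val, ZMod.cast_id]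
    ring
  rw [← hx, ZMod.natCast_eq_zero_iff]
  have hv := ZMod.val_lt x
  constructor
  · rintro ⟨c, hc⟩
    have : c < 2 := by nlinarith
    interval_cases c <;> omega
  · rintro (h | h)
    · simp [h]
    · exact ⟨1, by omega⟩

lemma side_neg (p : ℕ) (x : ZMod (p^3+1)) (hx : x ≠ 0) (hx2 : x + x ≠ 0) :
    ((p^3+1 : ℕ) < 2 * (-x).val ↔ ¬ ((p^3+1:ℕ) < 2 * x.val)) := by
  have h1 : (-x).val = (p^3+1) - x.val := by
    rw [ZMod.neg_val, if_neg hx]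
  have hv := ZMod.val_lt x
  have hv0 : x.val ≠ 0 := fun h => hx ((ZMod.val_eq_zero x).mp h)
  have h2 : 2 * x.val ≠ p^3+1 := by
    intro hc; exact hx2 ((addself p x).mpr (Or.inr hc))
  omega

lemma pmul_eq_self (p : ℕ) (i : ZMod (p^3+1)) (h : (p : ZMod (p^3+1)) * i = i) :
    i + i = 0 := by
  linear_combination (-((p:ZMod (p^3+1))^2 + p + 1)) * h + i * pcube p

lemma p2mul_eq_self (p : ℕ) (i : ZMod (p^3+1)) (h : (p : ZMod (p^3+1))^2 * i = i) :
    (p : ZMod (p^3+1)) * i = -i := by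
  linear_combination (-(p:ZMod (p^3+1))) * h + i * pcube p


lemma pow_mod6 (p : ℕ) (j : ℕ) : ((p : ZMod (p^3+1)))^j = (p : ZMod (p^3+1))^(j % 6) := by
  conv_lhs => rw [show j = 6*(j/6) + j % 6 by omega]
  rw [pow_add, pow_mul, psix p, one_pow, one_mul]

lemma orb_eq (p : ℕ) (hp2 : 2 ≤ p) (i : ZMod (p^3+1)) :
    orb p (p^3+1) i = Finset.image (fun j : ℕ => (p : ZMod (p^3+1)) ^ j * i) (Finset.range 6) := by
  have h6 : 6 ≤ p^3+1 := by have : 2^3 ≤ p^3 := Nat.pow_le_pow_left hp2 3; omega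
  apply Finset.Subset.antisymm
  · intro x hx
    simp only [orb, Finset.mem_image, Finset.mem_range] at hx ⊢
    obtain ⟨j, hj, rfl⟩ := hx
    exact ⟨j % 6, Nat.mod_lt _ (by norm_num), by rw [← pow_mod6]⟩
  · intro x hx
    simp only [orb, Finset.mem_image, Finset.mem_range] at hx ⊢
    obtain ⟨j, hj, rfl⟩ := hx
    exact ⟨j, lt_of_lt_of_le hj h6, rfl⟩

lemma mem_orb_iff (p : ℕ) (hp2 : 2 ≤ p) (i x : ZMod (p^3+1)) :
    x ∈ orb p (p^3+1) i ↔ ∃ k, x = (p : ZMod (p^3+1))^k * i := by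
  rw [orb_eq p hp2]
  simp only [Finset.mem_image, Finset.mem_range]
  constructor
  · rintro ⟨j, hj, rfl⟩; exact ⟨j, rfl⟩
  · rintro ⟨k, rfl⟩
    exact ⟨k % 6, Nat.mod_lt _ (by norm_num), by rw [← pow_mod6]⟩

lemma self_mem_orb (p : ℕ) (hp2 : 2 ≤ p) (i : ZMod (p^3+1)) : i ∈ orb p (p^3+1) i :=
  (mem_orb_iff p hp2 i i).mpr ⟨0, by simp⟩

lemma orb_eq_of_mem (p : ℕ) (hp2 : 2 ≤ p) {i x : ZMod (p^3+1)}
    (hx : x ∈ orb p (p^3+1) i) : orb p (p^3+1) x = orb p (p^3+1) i := by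
  obtain ⟨k, rfl⟩ := (mem_orb_iff p hp2 i x).mp hx
  ext y
  rw [mem_orb_iff p hp2, mem_orb_iff p hp2]
  constructor
  · rintro ⟨m, rfl⟩
    exact ⟨m + k, by rw [pow_add, mul_assoc]⟩
  · rintro ⟨m, rfl⟩
    refine ⟨m + 5*k, ?_⟩
    rw [pow_add, mul_assoc, ← mul_assoc ((p:ZMod (p^3+1))^(5*k)), ← pow_add]
    have : ((p : ZMod (p^3+1)))^(5*k+k) = 1 := by
      rw [show 5*k+k = 6*k by ring, pow_mul, psix p, one_pow]
    rw [this, one_mul]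

/-- If `p^t * i = i` for some `1 ≤ t ≤ 5` then either `i + i = 0` or `p*i = -i`. -/
lemma pow_fix (p : ℕ) {i : ZMod (p^3+1)} {t : ℕ} (ht1 : 1 ≤ t) (ht5 : t ≤ 5)
    (h : (p : ZMod (p^3+1))^t * i = i) (h2 : i + i ≠ 0) : (p : ZMod (p^3+1)) * i = -i := by
  have h3 := pcube p
  interval_cases t
  · exact absurd (pmul_eq_self p i (by simpa using h)) h2
  · exact p2mul_eq_self p i h
  · exfalso
    rw [h3, neg_one_mul] at h
    exact h2 (by linear_combination -h)
  · -- p^4 = -p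
    have h4 : (p : ZMod (p^3+1))^4 = -(p:ZMod (p^3+1)) := by
      linear_combination (p : ZMod (p^3+1)) * h3
    rw [h4] at h
    linear_combination -h
  · -- p^5 = -p^2 : -p^2 i = i → p^2 i = -i → p^3 i = -p i → -i = -p i → p i = i → i+i=0
    have h5 : (p : ZMod (p^3+1))^5 = -(p:ZMod (p^3+1))^2 := by
      linear_combination (p : ZMod (p^3+1))^2 * h3
    rw [h5] at h
    -- h : -(p^2) * i = i
    have hp2i : (p : ZMod (p^3+1))^2 * i = -i := by linear_combination -h
    have : (p : ZMod (p^3+1)) * i = i := by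
      have := congrArg (fun z => (p : ZMod (p^3+1)) * z) hp2i
      -- p * (p^2 * i) = p * (-i)  i.e.  p^3 * i = -(p i)  i.e. -i = -(p i)
      have h' : (p:ZMod (p^3+1))^3 * i = -((p:ZMod (p^3+1)) * i) := by
        linear_combination this
      rw [h3] at h'
      linear_combination h'
    exact absurd (pmul_eq_self p i this) h2

lemma card_orb_two (p : ℕ) (hp2 : 2 ≤ p) {i : ZMod (p^3+1)}
    (h2 : i + i ≠ 0) (hP : (p : ZMod (p^3+1)) * i = -i) :
    (orb p (p^3+1) i).card = 2 := by
  have hii : i ≠ -i := fun h => h2 (by linear_combination h)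
  have e2 : (p : ZMod (p^3+1))^2 * i = i := by
    rw [pow_two, mul_assoc, hP, mul_neg, hP, neg_neg]
  have estep : ∀ k, (p : ZMod (p^3+1))^(k+2) * i = (p : ZMod (p^3+1))^k * i := by
    intro k
    rw [pow_add, mul_assoc, e2]
  have horb : orb p (p^3+1) i = {i, -i} := by
    rw [orb_eq p hp2]
    ext x
    simp only [Finset.mem_image, Finset.mem_range, Finset.mem_insert, Finset.mem_singleton]
    constructor
    · rintro ⟨j, hj, rfl⟩
      interval_cases j
      · simp
      · simp [hP]
      · simp [e2]
      · rw [estep 1]; simp [hP]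
      · rw [estep 2, estep 0]; simp
      · rw [estep 3, estep 1]; simp [hP]
    · rintro (rfl | rfl)
      · exact ⟨0, by norm_num⟩
      · exact ⟨1, by norm_num, by simpa using hP⟩
  rw [horb, Finset.card_pair hii]

lemma card_orb_six (p : ℕ) (hp2 : 2 ≤ p) {i : ZMod (p^3+1)}
    (h2 : i + i ≠ 0) (hP : (p : ZMod (p^3+1)) * i ≠ -i) :
    (orb p (p^3+1) i).card = 6 := by
  rw [orb_eq p hp2]
  rw [Finset.card_image_of_injOn, Finset.card_range]
  have key : ∀ a b : ℕ, a < b → b < 6 →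
      (p:ZMod (p^3+1))^a * i = (p:ZMod (p^3+1))^b * i → False := by
    intro a b hab hb6 he
    have hu : IsUnit ((p : ZMod (p^3+1))^a) := (punit p).pow a
    have : (p : ZMod (p^3+1))^(b - a) * i = i := by
      apply hu.mul_left_cancel
      rw [← mul_assoc, ← pow_add]
      rw [show a + (b-a) = b by omega]
      exact he.symm
    exact hP (pow_fix p (by omega) (by omega) this h2)
  intro a ha b hb hab
  simp only [Finset.mem_coe, Finset.mem_range] at ha hb
  rcases lt_trichotomy a b with h | h | h
  · exact absurd (key a b h hb hab) not_false
  · exact h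
  · exact absurd (key b a h ha hab.symm) not_false

lemma sup7 (f : ℕ → ℤ) : (Finset.range 7).sup' Finset.nonempty_range_add_one f
    = f 0 ⊔ f 1 ⊔ f 2 ⊔ f 3 ⊔ f 4 ⊔ f 5 ⊔ f 6 := by
  have : (Finset.range 7) = {0,1,2,3,4,5,6} := by decide
  simp only [this]
  simp [Finset.sup'_insert]

lemma sup3 (f : ℕ → ℤ) : (Finset.range 3).sup' Finset.nonempty_range_add_one f
    = f 0 ⊔ f 1 ⊔ f 2 := by
  have : (Finset.range 3) = {0,1,2} := by decide
  simp only [this]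
  simp [Finset.sup'_insert]

lemma inf7 (f : ℕ → ℤ) : (Finset.range 7).inf' Finset.nonempty_range_add_one f
    = f 0 ⊓ f 1 ⊓ f 2 ⊓ f 3 ⊓ f 4 ⊓ f 5 ⊓ f 6 := by
  have : (Finset.range 7) = {0,1,2,3,4,5,6} := by decide
  simp only [this]
  simp [Finset.inf'_insert]

lemma inf3 (f : ℕ → ℤ) : (Finset.range 3).inf' Finset.nonempty_range_add_one f
    = f 0 ⊓ f 1 ⊓ f 2 := by
  have : (Finset.range 3) = {0,1,2} := by decide
  simp only [this]
  simp [Finset.inf'_insert]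

/-- `true` iff `x` lies in the "upper" half `B`. -/
def sb (p : ℕ) (x : ZMod (p^3+1)) : Bool := decide ((p^3+1:ℕ) < 2 * x.val)

lemma sb_neg (p : ℕ) (x : ZMod (p^3+1)) (hx : x ≠ 0) (hx2 : x + x ≠ 0) :
    sb p (-x) = !sb p x := by
  have h := side_neg p x hx hx2
  simp only [sb]
  by_cases hc : (p^3+1:ℕ) < 2 * x.val
  · have hn : ¬((p^3+1:ℕ) < 2 * (-x).val) := fun hh => (h.mp hh) hc
    simp [hc, hn]
  · have hy : (p^3+1:ℕ) < 2 * (-x).val := h.mpr hc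
    simp [hc, hy]

lemma mul_mem_s (p : ℕ) {i : ZMod (p^3+1)} (hi : i ≠ 0) (h2 : i + i ≠ 0) (j : ℕ) :
    (p : ZMod (p^3+1))^j * i ≠ 0 ∧
      (p : ZMod (p^3+1))^j * i + (p : ZMod (p^3+1))^j * i ≠ 0 := by
  have hu : IsUnit ((p : ZMod (p^3+1))^j) := (punit p).pow j
  constructor
  · intro h; exact hi (by rwa [hu.mul_right_eq_zero] at h)
  · intro h
    rw [← mul_add, hu.mul_right_eq_zero] at h
    exact h2 h

/-- The alternating condition for the word of the orbit of `i`. -/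
def altP (p : ℕ) (i : ZMod (p^3+1)) : Prop :=
  sb p ((p : ZMod (p^3+1)) * i) = !sb p i ∧
    sb p ((p : ZMod (p^3+1))^2 * i) = sb p i

lemma htElt_formula (p : ℕ) (hp2 : 2 ≤ p) {i : ZMod (p^3+1)}
    (hi : i ≠ 0) (h2 : i + i ≠ 0) :
    htElt p (p^3+1) i = if altP p i then 1 else 3 := by
  have hstep : ∀ j, aseq p (p^3+1) i (j+1) = aseq p (p^3+1) i j +
      (if sb p ((p : ZMod (p^3+1))^j * i) = true then -1 else 1) := by
    intro j
    have hmem := mul_mem_s p hi h2 j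
    show (aseq p (p^3+1) i j +
        (if (p^3+1 : ℕ) < 2 * (-((p : ZMod (p^3+1)) ^ j * i)).val then 1 else -1)) = _
    congr 1
    have hside := side_neg p _ hmem.1 hmem.2
    by_cases hc : (p^3+1:ℕ) < 2 * (((p : ZMod (p^3+1))^j * i)).val
    · rw [if_neg (fun hh => (hside.mp hh) hc), if_pos (by simp [sb, hc])]
    · rw [if_pos (hside.mpr hc), if_neg (by simp [sb, hc])]
  have e0 : aseq p (p^3+1) i 0 = 0 := rfl
  have s0 : (p : ZMod (p^3+1))^0 * i = i := by norm_num
  have s1 : (p : ZMod (p^3+1))^1 * i = (p : ZMod (p^3+1)) * i := by norm_num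
  have s3 : sb p ((p : ZMod (p^3+1))^3 * i) = !sb p i := by
    have h3 : (p : ZMod (p^3+1))^3 * i = -i := by rw [pcube p]; ring
    rw [h3, sb_neg p i hi h2]
  have s4 : sb p ((p : ZMod (p^3+1))^4 * i) = !sb p ((p : ZMod (p^3+1)) * i) := by
    have h4 : (p : ZMod (p^3+1))^4 * i = -((p : ZMod (p^3+1)) * i) := by
      linear_combination ((p : ZMod (p^3+1)) * i) * pcube p
    have hm := mul_mem_s p hi h2 1
    rw [s1] at hm
    rw [h4, sb_neg p _ hm.1 hm.2]
  have s5 : sb p ((p : ZMod (p^3+1))^5 * i) = !sb p ((p : ZMod (p^3+1))^2 * i) := by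
    have h5 : (p : ZMod (p^3+1))^5 * i = -((p : ZMod (p^3+1))^2 * i) := by
      linear_combination ((p : ZMod (p^3+1))^2 * i) * pcube p
    have hm := mul_mem_s p hi h2 2
    rw [h5, sb_neg p _ hm.1 hm.2]
  by_cases hP : (p : ZMod (p^3+1)) * i = -i
  · -- small orbit: htElt = 1, and altP holds
    have hc : (orb p (p^3+1) i).card = 2 := card_orb_two p hp2 h2 hP
    have halt : altP p i := by
      constructor
      · rw [hP, sb_neg p i hi h2]
      · have : (p : ZMod (p^3+1))^2 * i = i := by
          rw [pow_two, mul_assoc, hP, mul_neg, hP, neg_neg]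
        rw [this]
    rw [if_pos halt]
    have hrw : (orb p (p^3+1) i).card + 1 = 3 := by rw [hc]
    have e1 := hstep 0
    have e2 := hstep 1
    rw [e0, s0] at e1
    rw [e1, s1, halt.1] at e2
    simp only [htElt, hrw]
    rw [sup3, inf3, e0, e1, e2]
    rcases Bool.eq_false_or_eq_true (sb p i) with hm0 | hm0 <;>
      simp only [hm0] <;> norm_num <;> rfl
  · -- big orbit
    have hc : (orb p (p^3+1) i).card = 6 := card_orb_six p hp2 h2 hP
    have hrw : (orb p (p^3+1) i).card + 1 = 7 := by rw [hc]
    have e1 := hstep 0; rw [e0, s0] at e1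
    have e2 := hstep 1; rw [e1, s1] at e2
    have e3 := hstep 2; rw [e2] at e3
    have e4 := hstep 3; rw [e3, s3] at e4
    have e5 := hstep 4; rw [e4, s4] at e5
    have e6 := hstep 5; rw [e5, s5] at e6
    simp only [htElt, hrw, altP]
    rw [sup7, inf7, e0, e1, e2, e3, e4, e5, e6]
    rcases Bool.eq_false_or_eq_true (sb p i) with hm0 | hm0 <;>
      rcases Bool.eq_false_or_eq_true (sb p ((p : ZMod (p^3+1)) * i)) with hm1 | hm1 <;>
      rcases Bool.eq_false_or_eq_true (sb p ((p : ZMod (p^3+1))^2 * i)) with hm2 | hm2 <;>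
      simp only [hm0, hm1, hm2] <;> norm_num <;> rfl

lemma altP_mul (p : ℕ) {i : ZMod (p^3+1)} (hi : i ≠ 0) (h2 : i + i ≠ 0) :
    altP p ((p : ZMod (p^3+1)) * i) ↔ altP p i := by
  have h1 : (p : ZMod (p^3+1)) * ((p : ZMod (p^3+1)) * i) = (p : ZMod (p^3+1))^2 * i := by
    ring
  have h2' : (p : ZMod (p^3+1))^2 * ((p : ZMod (p^3+1)) * i) = -i := by
    have := pcube p; linear_combination i * this
  have h3 : sb p ((p : ZMod (p^3+1))^2 * ((p : ZMod (p^3+1)) * i)) = !sb p i := by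
    rw [h2', sb_neg p i hi h2]
  unfold altP
  rw [h1, h3]
  rcases Bool.eq_false_or_eq_true (sb p i) with hm0 | hm0 <;>
    rcases Bool.eq_false_or_eq_true (sb p ((p : ZMod (p^3+1)) * i)) with hm1 | hm1 <;>
    rcases Bool.eq_false_or_eq_true (sb p ((p : ZMod (p^3+1))^2 * i)) with hm2 | hm2 <;>
    simp [hm0, hm1, hm2]

lemma altP_pow (p : ℕ) {i : ZMod (p^3+1)} (hi : i ≠ 0) (h2 : i + i ≠ 0) (k : ℕ) :
    altP p ((p : ZMod (p^3+1))^k * i) ↔ altP p i := by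
  induction k with
  | zero => norm_num
  | succ n ih =>
    have hm := mul_mem_s p hi h2 n
    have : (p : ZMod (p^3+1))^(n+1) * i
        = (p : ZMod (p^3+1)) * ((p : ZMod (p^3+1))^n * i) := by ring
    rw [this, altP_mul p hm.1 hm.2, ih]

lemma htOrbit_orb (p : ℕ) (hp2 : 2 ≤ p) {i : ZMod (p^3+1)}
    (hi : i ≠ 0) (h2 : i + i ≠ 0) :
    htOrbit p (p^3+1) (orb p (p^3+1) i) = htElt p (p^3+1) i := by
  have hcongr : ∀ x ∈ orb p (p^3+1) i, htElt p (p^3+1) x = htElt p (p^3+1) i := by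
    intro x hx
    obtain ⟨k, rfl⟩ := (mem_orb_iff p hp2 i x).mp hx
    have hm := mul_mem_s p hi h2 k
    rw [htElt_formula p hp2 hm.1 hm.2, htElt_formula p hp2 hi h2]
    by_cases halt : altP p i
    · rw [if_pos halt, if_pos ((altP_pow p hi h2 k).mpr halt)]
    · rw [if_neg halt, if_neg (fun hc => halt ((altP_pow p hi h2 k).mp hc))]
  unfold htOrbit
  rw [Finset.sup_congr rfl hcongr]
  exact Finset.sup_const ⟨i, self_mem_orb p hp2 i⟩ _

noncomputable def sS (p : ℕ) : Finset (ZMod (p^3+1)) :=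
  Finset.univ.filter fun x : ZMod (p^3+1) => x ≠ 0 ∧ x + x ≠ 0

noncomputable def cls (p : ℕ) (t : Bool × Bool × Bool) : Finset (ZMod (p^3+1)) :=
  (sS p).filter fun i => sb p i = t.1 ∧ sb p ((p : ZMod (p^3+1)) * i) = t.2.1 ∧
    sb p ((p : ZMod (p^3+1))^2 * i) = t.2.2

lemma card_sS (p : ℕ) (hp2 : 2 ≤ p) (hodd : Odd p) : (sS p).card = p^3 - 1 := by
  classical
  obtain ⟨t, rfl⟩ := hodd
  set d := (2*t+1)^3+1 with hd
  have hdodd : (2*t+1)^3 % 2 = 1 := Nat.odd_iff.mp (Odd.pow (odd_two_mul_add_one t))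
  have hq : 2 * (d/2) = d := by omega
  have hql : d/2 < d := by omega
  have hq0 : d/2 ≠ 0 := by omega
  set c : ZMod d := ((d/2 : ℕ) : ZMod d) with hc
  have hcval : c.val = d/2 := ZMod.val_cast_of_lt hql
  have hcompl : Finset.univ.filter (fun x : ZMod d => ¬(x ≠ 0 ∧ x + x ≠ 0)) = {0, c} := by
    ext x
    simp only [Finset.mem_filter, Finset.mem_univ, true_and, Finset.mem_insert,
      Finset.mem_singleton, not_and_or, not_ne_iff, not_not]
    constructor
    · rintro (rfl | hx)
      · left; rfl
      · rcases (addself (2*t+1) x).mp hx with h | h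
        · left; exact (ZMod.val_eq_zero x).mp h
        · right
          have : x.val = d/2 := by omega
          calc x = ((x.val : ℕ) : ZMod d) := by rw [ZMod.natCast_val, ZMod.cast_id]
          _ = c := by rw [this]
    · rintro (rfl | rfl)
      · left; rfl
      · right
        exact (addself (2*t+1) c).mpr (Or.inr (by rw [hcval]; omega))
  have hcard2 : ({0, c} : Finset (ZMod d)).card = 2 := by
    rw [Finset.card_pair]
    intro h
    exact hq0 (by rw [← hcval, ← h, ZMod.val_zero])
  have hsplit := Finset.card_filter_add_card_filter_not
    (s := (Finset.univ : Finset (ZMod d))) (p := fun x : ZMod d => x ≠ 0 ∧ x + x ≠ 0)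
  have huniv : (Finset.univ : Finset (ZMod d)).card = d := by
    rw [Finset.card_univ, ZMod.card]
  rw [hcompl, hcard2, huniv] at hsplit
  have hs' : sS (2*t+1) = Finset.univ.filter (fun x : ZMod d => x ≠ 0 ∧ x + x ≠ 0) := rfl
  rw [hs']
  omega

lemma cls_rot (p : ℕ) (hp2 : 2 ≤ p) (a b c : Bool) :
    (cls p (a, b, c)).card = (cls p (b, c, !a)).card := by
  classical
  refine Finset.card_bij' (fun x _ => (p : ZMod (p^3+1)) * x)
    (fun y _ => (p : ZMod (p^3+1))^5 * y) ?hi ?hj ?hl ?hr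
  case hi =>
    intro x hx
    simp only [cls, sS, Finset.mem_filter, Finset.mem_univ, true_and] at hx ⊢
    obtain ⟨⟨hx0, hx2⟩, hsa, hsb, hsc⟩ := hx
    have hm1 := mul_mem_s p hx0 hx2 1
    rw [pow_one] at hm1
    refine ⟨hm1, hsb, ?_, ?_⟩
    · have h2 : (p : ZMod (p^3+1)) * ((p : ZMod (p^3+1)) * x) = (p : ZMod (p^3+1))^2 * x := by
        ring
      rw [h2]; exact hsc
    · have h3 : (p : ZMod (p^3+1))^2 * ((p : ZMod (p^3+1)) * x) = -x := by
        linear_combination x * pcube p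
      rw [h3, sb_neg p x hx0 hx2, hsa]
  case hj =>
    intro y hy
    simp only [cls, sS, Finset.mem_filter, Finset.mem_univ, true_and] at hy ⊢
    obtain ⟨⟨hy0, hy2⟩, hsa, hsb, hsc⟩ := hy
    have hm5 := mul_mem_s p hy0 hy2 5
    refine ⟨hm5, ?_, ?_, ?_⟩
    · have h5 : (p : ZMod (p^3+1))^5 * y = -((p : ZMod (p^3+1))^2 * y) := by
        linear_combination ((p : ZMod (p^3+1))^2 * y) * pcube p
      have hm2 := mul_mem_s p hy0 hy2 2
      rw [h5, sb_neg p _ hm2.1 hm2.2, hsc, Bool.not_not]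
    · have h6 : (p : ZMod (p^3+1)) * ((p : ZMod (p^3+1))^5 * y) = y := by
        linear_combination y * psix p
      rw [h6]; exact hsa
    · have h7 : (p : ZMod (p^3+1))^2 * ((p : ZMod (p^3+1))^5 * y)
          = (p : ZMod (p^3+1)) * y := by
        linear_combination ((p : ZMod (p^3+1)) * y) * psix p
      rw [h7]; exact hsb
  case hl =>
    intro x _
    show (p : ZMod (p^3+1))^5 * ((p : ZMod (p^3+1)) * x) = x
    linear_combination x * psix p
  case hr =>
    intro y _
    show (p : ZMod (p^3+1)) * ((p : ZMod (p^3+1))^5 * y) = y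
    linear_combination y * psix p

lemma cls_partition (p : ℕ) :
    ∑ t : Bool × Bool × Bool, (cls p t).card = (sS p).card := by
  classical
  rw [Finset.card_eq_sum_card_fiberwise
    (f := fun i : ZMod (p^3+1) => (sb p i, sb p ((p : ZMod (p^3+1)) * i),
      sb p ((p : ZMod (p^3+1))^2 * i))) (t := Finset.univ) (fun x _ => Finset.mem_univ _)]
  apply Finset.sum_congr rfl
  intro t _
  congr 1
  unfold cls
  apply Finset.filter_congr
  intro x _
  simp [Prod.ext_iff]

/-- Forward numeric lemma. -/
lemma key_nat (p : ℕ) (hp2 : 2 ≤ p) (hpo : p % 2 = 1) (v k r : ℕ)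
    (hv_eq : v = p^2 * k + r) (hrlt : r < p^2)
    (hv1 : 1 ≤ v) (h2v : 2*v < p^3+1)
    (hm1 : 1 ≤ (p*v) % (p^3+1)) (h2m : 2*((p*v) % (p^3+1)) < p^3+1) :
    k < (p+1)/2 ∧ 1 ≤ r ∧ r ≤ (p^2-1)/2 := by
  have hp2pos : 0 < p^2 := by positivity
  have hkle : k ≤ p^2 * k := Nat.le_mul_of_pos_left _ hp2pos
  -- 2k < p+1
  have hkp : 2*k < p + 1 := by
    by_contra hcon
    push_neg at hcon
    have h1 : (p+1) * p^2 ≤ (2*k) * p^2 := Nat.mul_le_mul_right _ hcon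
    have h2 : (p+1) * p^2 = p^3 + p^2 := by ring
    have h3 : (2*k) * p^2 = 2*(p^2*k) := by ring
    omega
  -- r ≥ 1
  have hr1 : 1 ≤ r := by
    by_contra hcon
    have hr0 : r = 0 := by omega
    have hk1 : 1 ≤ k := by
      rcases Nat.eq_zero_or_pos k with h | h
      · subst h; simp at hv_eq; omega
      · exact h
    obtain ⟨k', hk'⟩ : ∃ k', k = k'+1 := ⟨k-1, by omega⟩
    have hpv : p * v = p^3*k' + p^3 := by rw [hv_eq, hr0, hk']; ring
    have hex : (p^3+1)*k' = p^3*k' + k' := by ring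
    have hkle3 : k ≤ p^3 := by omega
    have hrewrite : p * v = ((p^3) - k') + (p^3+1)*k' := by omega
    have hmod : (p*v) % (p^3+1) = p^3 - k' := by
      rw [hrewrite, Nat.add_mul_mod_self_left, Nat.mod_eq_of_lt (by omega)]
    rw [hmod] at h2m
    omega
  -- key identity
  have hkpr : k ≤ p * r := by
    have hkp' : k < p := by omega
    have : p ≤ p * r := Nat.le_mul_of_pos_right _ hr1
    omega
  have hpv : p * v = p^3 * k + p * r := by rw [hv_eq]; ring
  have hprp3 : p * r + p ≤ p^3 := by
    have h1 : p*(r+1) ≤ p*p^2 := Nat.mul_le_mul_left _ (by omega)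
    have h2 : p*(r+1) = p*r + p := by ring
    have h3 : p*p^2 = p^3 := by ring
    omega
  have hprlt : p * r - k < p^3+1 := by omega
  have hrewrite : p * v = (p*r - k) + (p^3+1)*k := by
    have hex : (p^3+1)*k = p^3*k + k := by ring
    omega
  have hmod : (p*v) % (p^3+1) = p*r - k := by
    rw [hrewrite, Nat.add_mul_mod_self_left, Nat.mod_eq_of_lt hprlt]
  rw [hmod] at h2m hm1
  -- r ≤ (p^2-1)/2
  have hp2odd : p^2 % 2 = 1 := Nat.odd_iff.mp (Nat.odd_iff.mpr hpo).pow
  have h2r : 2*r ≤ p^2 := by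
    by_contra hcon
    push_neg at hcon
    have h1 : p*(p^2+1) ≤ p*(2*r) := Nat.mul_le_mul_left _ (by omega)
    have h2 : p*(p^2+1) = p^3 + p := by ring
    have h3 : p*(2*r) = 2*(p*r) := by ring
    omega
  refine ⟨by omega, hr1, by omega⟩

/-- Backward numeric lemma. -/
lemma key_nat2 (p : ℕ) (hp2 : 2 ≤ p) (hpo : p % 2 = 1) (k r : ℕ)
    (hk : k < (p+1)/2) (hr1 : 1 ≤ r) (hr2 : r ≤ (p^2-1)/2) :
    1 ≤ k*p^2 + r ∧ 2*(k*p^2 + r) < p^3+1 ∧ k*p^2+r < p^3+1 ∧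
      (p*(k*p^2+r)) % (p^3+1) = p*r - k ∧ k + 1 ≤ p*r ∧ 2*(p*r - k) < p^3+1 ∧
      (k*p^2+r) / p^2 = k ∧ (k*p^2+r) % p^2 = r := by
  have hp2pos : 0 < p^2 := by positivity
  have hp2odd : p^2 % 2 = 1 := Nat.odd_iff.mp (Nat.odd_iff.mpr hpo).pow
  have hk2 : 2*k + 1 ≤ p := by omega
  have h2r : 2*r + 1 ≤ p^2 := by omega
  have hrlt : r < p^2 := by omega
  have hbound : 2*(k*p^2 + r) < p^3 + 1 := by
    have h1 : (2*k+1)*p^2 ≤ p*p^2 := Nat.mul_le_mul_right _ hk2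
    have h2 : (2*k+1)*p^2 = 2*(k*p^2) + p^2 := by ring
    have h3 : p*p^2 = p^3 := by ring
    omega
  have hkpr : k + 1 ≤ p * r := by
    have h1 : p ≤ p * r := Nat.le_mul_of_pos_right _ hr1
    omega
  have hpr : 2*(p*r) + p ≤ p^3 := by
    have h1 : p*(2*r+1) ≤ p*p^2 := Nat.mul_le_mul_left _ h2r
    have h2 : p*(2*r+1) = 2*(p*r) + p := by ring
    have h3 : p*p^2 = p^3 := by ring
    omega
  have hprlt : p*r - k < p^3+1 := by omega
  have hrewrite : p * (k*p^2+r) = (p*r - k) + (p^3+1)*k := by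
    have h1 : p * (k*p^2+r) = p^3*k + p*r := by ring
    have h2 : (p^3+1)*k = p^3*k + k := by ring
    omega
  have hmod : (p*(k*p^2+r)) % (p^3+1) = p*r - k := by
    rw [hrewrite, Nat.add_mul_mod_self_left, Nat.mod_eq_of_lt hprlt]
  have hcomm : k*p^2 + r = r + p^2*k := by ring
  have hdiv : (k*p^2+r) / p^2 = k := by
    rw [hcomm, Nat.add_mul_div_left _ _ hp2pos, Nat.div_eq_of_lt hrlt]
    omega
  have hmod2 : (k*p^2+r) % p^2 = r := by
    rw [hcomm, Nat.add_mul_mod_self_left, Nat.mod_eq_of_lt hrlt]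
  exact ⟨by omega, hbound, by omega, hmod, hkpr, by omega, hdiv, hmod2⟩

lemma pair_count (p : ℕ) (hp2 : 2 ≤ p) (hodd : Odd p) :
    ((sS p).filter (fun i => sb p i = false ∧
        sb p ((p : ZMod (p^3+1)) * i) = false)).card
      = (p+1)/2 * ((p^2-1)/2) := by
  classical
  have hpo := Nat.odd_iff.mp hodd
  have hple : p ≤ p^3 := Nat.le_self_pow (by norm_num) p
  have hdlt : p < p^3+1 := by omega
  have hpval : (p : ZMod (p^3+1)).val = p := by
    rw [ZMod.val_natCast]; exact Nat.mod_eq_of_lt hdlt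
  have hvpx : ∀ x : ZMod (p^3+1), ((p : ZMod (p^3+1)) * x).val = (p * x.val) % (p^3+1) := by
    intro x; rw [ZMod.val_mul, hpval]
  have htarget : ((Finset.range ((p+1)/2)) ×ˢ (Finset.Icc 1 ((p^2-1)/2))).card
      = (p+1)/2 * ((p^2-1)/2) := by
    rw [Finset.card_product, Finset.card_range, Nat.card_Icc, Nat.add_sub_cancel]
  rw [← htarget]
  have hmem : ∀ x : ZMod (p^3+1),
      (x ∈ (sS p).filter (fun i => sb p i = false ∧
        sb p ((p : ZMod (p^3+1)) * i) = false)) ↔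
      (1 ≤ x.val ∧ 2*x.val < p^3+1 ∧ 1 ≤ (p*x.val) % (p^3+1) ∧
        2*((p*x.val) % (p^3+1)) < p^3+1) := by
    intro x
    simp only [sS, Finset.mem_filter, Finset.mem_univ, true_and, sb,
      decide_eq_false_iff_not, not_lt]
    constructor
    · rintro ⟨⟨hx0, hx2⟩, hsx, hspx⟩
      have hv0 : x.val ≠ 0 := fun h => hx0 ((ZMod.val_eq_zero x).mp h)
      have h2vne : 2*x.val ≠ p^3+1 := by
        intro h; exact hx2 ((addself p x).mpr (Or.inr h))
      have hm := mul_mem_s p hx0 hx2 1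
      rw [pow_one] at hm
      have hm0 : ((p : ZMod (p^3+1)) * x).val ≠ 0 :=
        fun h => hm.1 ((ZMod.val_eq_zero _).mp h)
      have h2mne : 2*((p : ZMod (p^3+1)) * x).val ≠ p^3+1 := by
        intro h; exact hm.2 ((addself p _).mpr (Or.inr h))
      rw [hvpx x] at hm0 h2mne hspx
      exact ⟨by omega, by omega, by omega, by omega⟩
    · rintro ⟨h1, h2, h3, h4⟩
      have hx0 : x ≠ 0 := by
        intro h; rw [h, ZMod.val_zero] at h1; omega
      have hx2 : x + x ≠ 0 := by
        intro h
        rcases (addself p x).mp h with h' | h' <;> omega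
      exact ⟨⟨hx0, hx2⟩, by omega, by rw [hvpx x]; omega⟩
  refine Finset.card_bij' (fun x _ => (x.val / p^2, x.val % p^2))
    (fun kr _ => ((kr.1 * p^2 + kr.2 : ℕ) : ZMod (p^3+1))) ?hi ?hj ?hl ?hr
  case hi =>
    intro x hx
    obtain ⟨h1, h2, h3, h4⟩ := (hmem x).mp hx
    obtain ⟨hk, hr1, hr2⟩ := key_nat p hp2 hpo x.val (x.val / p^2) (x.val % p^2)
      (Nat.div_add_mod x.val (p^2)).symm (Nat.mod_lt _ (by positivity)) h1 h2 h3 h4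
    simp only [Finset.mem_product, Finset.mem_range, Finset.mem_Icc]
    exact ⟨hk, hr1, hr2⟩
  case hj =>
    intro kr hkr
    simp only [Finset.mem_product, Finset.mem_range, Finset.mem_Icc] at hkr
    obtain ⟨g1, g2, g3, g4, g5, g6, g7, g8⟩ :=
      key_nat2 p hp2 hpo kr.1 kr.2 hkr.1 hkr.2.1 hkr.2.2
    rw [hmem]
    have hval : ((kr.1 * p^2 + kr.2 : ℕ) : ZMod (p^3+1)).val = kr.1 * p^2 + kr.2 :=
      ZMod.val_cast_of_lt g3
    rw [hval]
    exact ⟨g1, g2, by rw [g4]; omega, by rw [g4]; omega⟩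
  case hl =>
    intro x hx
    show (((x.val / p^2) * p^2 + x.val % p^2 : ℕ) : ZMod (p^3+1)) = x
    have heq : (x.val / p^2) * p^2 + x.val % p^2 = x.val := by
      rw [mul_comm]; exact Nat.div_add_mod _ _
    rw [heq, ZMod.natCast_val, ZMod.cast_id]
  case hr =>
    intro kr hkr
    simp only [Finset.mem_product, Finset.mem_range, Finset.mem_Icc] at hkr
    obtain ⟨g1, g2, g3, g4, g5, g6, g7, g8⟩ :=
      key_nat2 p hp2 hpo kr.1 kr.2 hkr.1 hkr.2.1 hkr.2.2
    have hval : ((kr.1 * p^2 + kr.2 : ℕ) : ZMod (p^3+1)).val = kr.1 * p^2 + kr.2 :=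
      ZMod.val_cast_of_lt g3
    show (_ , _) = kr
    rw [hval]
    exact Prod.ext (by rw [g7]) (by rw [g8])

end ShaAux

/-- for every odd prime `p`, with `d = p³ + 1`,
`∑_{o ∈ O_{d,p}} |o|·(3 − ht(o)) = (p − 1)³ / 2`. -/
theorem sha_sum_f_three (p : ℕ) (hp : p.Prime) (hodd : Odd p) :
    ∑ o ∈ Odp p (p ^ 3 + 1),
        (o.card : ℤ) * ((3 : ℤ) - (htOrbit p (p ^ 3 + 1) o : ℤ))
      = ((p : ℤ) - 1) ^ 3 / 2 := by
  classical
  have hp2 : 2 ≤ p := hp.two_le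
  have hpo : p % 2 = 1 := Nat.odd_iff.mp hodd
  -- Step 1: sum over orbits = sum over elements
  have hsum : ∑ o ∈ Odp p (p ^ 3 + 1),
      (o.card : ℤ) * ((3 : ℤ) - (htOrbit p (p ^ 3 + 1) o : ℤ))
      = ∑ i ∈ sS p, ((3 : ℤ) - (htOrbit p (p ^ 3 + 1) (orb p (p ^ 3 + 1) i) : ℤ)) := by
    unfold Odp
    refine Finset.sum_image'
      (fun i => (3 : ℤ) - (htOrbit p (p ^ 3 + 1) (orb p (p ^ 3 + 1) i) : ℤ)) ?_
    intro i hi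
    simp only [Finset.mem_filter, Finset.mem_univ, true_and] at hi
    obtain ⟨hi0, hi2⟩ := hi
    have hfib : (Finset.univ.filter
          (fun x : ZMod (p^3+1) => x ≠ 0 ∧ x + x ≠ 0)).filter
          (fun j => orb p (p^3+1) j = orb p (p^3+1) i) = orb p (p^3+1) i := by
      ext j
      simp only [Finset.mem_filter, Finset.mem_univ, true_and]
      constructor
      · rintro ⟨-, horb⟩
        rw [← horb]
        exact self_mem_orb p hp2 j
      · intro hj
        obtain ⟨k, hk⟩ := (mem_orb_iff p hp2 i j).mp hj
        have hm := mul_mem_s p hi0 hi2 k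
        rw [← hk] at hm
        exact ⟨hm, orb_eq_of_mem p hp2 hj⟩
    rw [hfib]
    have hcongr : ∀ j ∈ orb p (p^3+1) i,
        ((3 : ℤ) - (htOrbit p (p ^ 3 + 1) (orb p (p ^ 3 + 1) j) : ℤ))
        = ((3 : ℤ) - (htOrbit p (p ^ 3 + 1) (orb p (p ^ 3 + 1) i) : ℤ)) := by
      intro j hj
      rw [orb_eq_of_mem p hp2 hj]
    rw [Finset.sum_congr rfl hcongr, Finset.sum_const, nsmul_eq_mul]
  rw [hsum]
  -- Step 2: pointwise value via altP
  have hpt : ∀ i ∈ sS p,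
      ((3 : ℤ) - (htOrbit p (p ^ 3 + 1) (orb p (p ^ 3 + 1) i) : ℤ))
      = if altP p i then 2 else 0 := by
    intro i hi
    simp only [sS, Finset.mem_filter, Finset.mem_univ, true_and] at hi
    obtain ⟨hi0, hi2⟩ := hi
    rw [htOrbit_orb p hp2 hi0 hi2, htElt_formula p hp2 hi0 hi2]
    by_cases h : altP p i
    · rw [if_pos h, if_pos h]; norm_num
    · rw [if_neg h, if_neg h]; norm_num
  rw [Finset.sum_congr rfl hpt]
  -- Step 3: sum of indicator
  have hind : ∑ i ∈ sS p, (if altP p i then (2:ℤ) else 0)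
      = 2 * (((sS p).filter (altP p)).card : ℤ) := by
    rw [← Finset.sum_filter, Finset.sum_const, nsmul_eq_mul]
    ring
  rw [hind]
  -- Step 4: decompose the altP-count into two pattern classes
  have hG : (sS p).filter (altP p)
      = cls p (false, true, false) ∪ cls p (true, false, true) := by
    ext x
    simp only [cls, Finset.mem_filter, Finset.mem_union, altP]
    constructor
    · rintro ⟨hx, h1, h2⟩
      rcases Bool.eq_false_or_eq_true (sb p x) with hm | hm
      · exact Or.inr ⟨hx, hm, by simp [h1, hm], by simp [h2, hm]⟩
      · exact Or.inl ⟨hx, hm, by simp [h1, hm], by simp [h2, hm]⟩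
    · rintro (⟨hx, ha, hb, hc⟩ | ⟨hx, ha, hb, hc⟩) <;>
        exact ⟨hx, by simp [ha, hb], by simp [ha, hc]⟩
  have hGcard : ((sS p).filter (altP p)).card
      = (cls p (false, true, false)).card + (cls p (true, false, true)).card := by
    rw [hG, Finset.card_union_of_disjoint]
    rw [Finset.disjoint_left]
    intro a ha hb
    simp only [cls, Finset.mem_filter] at ha hb
    have h1 := ha.2.1
    have h2 := hb.2.1
    rw [h1] at h2
    exact Bool.false_ne_true h2
  -- Step 5: pattern class equalities via rotation
  have c1 : (cls p (false,false,false)).card = (cls p (false,false,true)).card := by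
    simpa using cls_rot p hp2 false false false
  have c2 : (cls p (false,false,true)).card = (cls p (false,true,true)).card := by
    simpa using cls_rot p hp2 false false true
  have c3 : (cls p (false,true,true)).card = (cls p (true,true,true)).card := by
    simpa using cls_rot p hp2 false true true
  have c4 : (cls p (true,true,true)).card = (cls p (true,true,false)).card := by
    simpa using cls_rot p hp2 true true true
  have c5 : (cls p (true,true,false)).card = (cls p (true,false,false)).card := by
    simpa using cls_rot p hp2 true true false
  have c6 : (cls p (false,true,false)).card = (cls p (true,false,true)).card := by
    simpa using cls_rot p hp2 false true false
  -- partition of sS into the eight classes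
  have hexp := cls_partition p
  simp only [Fintype.sum_prod_type, Fintype.sum_bool] at hexp
  -- pair count: classes (F,F,F) and (F,F,T)
  have hpairset : (sS p).filter (fun i => sb p i = false ∧
      sb p ((p : ZMod (p^3+1)) * i) = false)
      = cls p (false, false, false) ∪ cls p (false, false, true) := by
    ext x
    simp only [cls, Finset.mem_filter, Finset.mem_union]
    constructor
    · rintro ⟨hx, h1, h2⟩
      rcases Bool.eq_false_or_eq_true (sb p ((p : ZMod (p^3+1))^2 * x)) with hm | hm
      · exact Or.inr ⟨hx, h1, h2, hm⟩
      · exact Or.inl ⟨hx, h1, h2, hm⟩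
    · rintro (⟨hx, ha, hb, -⟩ | ⟨hx, ha, hb, -⟩) <;> exact ⟨hx, ha, hb⟩
  have hpair : ((sS p).filter (fun i => sb p i = false ∧
      sb p ((p : ZMod (p^3+1)) * i) = false)).card
      = (cls p (false,false,false)).card + (cls p (false,false,true)).card := by
    rw [hpairset, Finset.card_union_of_disjoint]
    rw [Finset.disjoint_left]
    intro a ha hb
    simp only [cls, Finset.mem_filter] at ha hb
    have h1 := ha.2.2.2
    have h2 := hb.2.2.2
    rw [h1] at h2
    exact Bool.false_ne_true h2
  have hpc := pair_count p hp2 hodd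
  have hS := card_sS p hp2 hodd
  -- numeric endgame
  obtain ⟨t, ht⟩ := hodd
  subst ht
  have hp1 : (2*t+1+1)/2 = t+1 := by omega
  have hp2e : (2*t+1)^2 = 4*t^2+4*t+1 := by ring
  have hsq : ((2*t+1)^2-1)/2 = 2*t^2+2*t := by omega
  have hprod : (t+1)*(2*t^2+2*t) = 2*t^3+4*t^2+2*t := by ring
  have hcb : (2*t+1)^3 = 8*t^3+12*t^2+6*t+1 := by ring
  rw [hp1, hsq, hprod] at hpc
  have hGval : ((sS (2*t+1)).filter (altP (2*t+1))).card = 2*t^3 := by omega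
  rw [hGval]
  have hr : (((2*t+1 : ℕ) : ℤ) - 1)^3 = 2*(4*(t:ℤ)^3) := by push_cast; ring
  rw [hr, Int.mul_ediv_cancel_left _ two_ne_zero]
  push_cast
  ring
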